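/- The function u_N(x) = Σ_{k=1}^N x_k − (|α|_1 − α_{N+1})/|α|_1 is an eigenfunction of L_α^(N) with eigenvalue −|α|_1: L_α^(N) u_N = −|α|_1 u_N. -/

import Mathlib

open MeasureTheory

noncomputable section

def simplex (N : ℕ) : Set (Fin N → ℝ) :=
  {x | (∀ i, 0 ≤ x i ∧ x i ≤ 1) ∧ ∑ i, x i ≤ 1}

def dirichletDensity (N : ℕ) (α : Fin (N + 1) → ℝ) (x : Fin N → ℝ) : ℝ :=
  (Real.Gamma (∑ k, α k) / ∏ k, Real.Gamma (α k)) *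
    Real.rpow (1 - ∑ i, x i) (α (Fin.last N) - 1) *
    ∏ i, Real.rpow (x i) (α (Fin.castSucc i) - 1)

def dirichlet (N : ℕ) (α : Fin (N + 1) → ℝ) : Measure (Fin N → ℝ) :=
  (volume.restrict (simplex N)).withDensity fun x => ENNReal.ofReal (dirichletDensity N α x)

/-- Partial derivative ∂_n f at x. -/
def pd (N : ℕ) (n : Fin N) (f : (Fin N → ℝ) → ℝ) (x : Fin N → ℝ) : ℝ :=
  fderiv ℝ f x (Pi.single n 1)

/-- The generator L_α^(N) = Σ_n [x_n(1−|x|₁)∂_n² + (α_n(1−|x|₁) − α_{N+1} x_n)∂_n]. -/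
def Lop (N : ℕ) (α : Fin (N + 1) → ℝ) (f : (Fin N → ℝ) → ℝ) (x : Fin N → ℝ) : ℝ :=
  ∑ n, (x n * (1 - ∑ i, x i) * pd N n (fun y => pd N n f y) x
    + (α (Fin.castSucc n) * (1 - ∑ i, x i) - α (Fin.last N) * x n) * pd N n f x)

lemma pd_sum_sub_const (N : ℕ) (c : ℝ) (n : Fin N) (x : Fin N → ℝ) :
    pd N n (fun y => (∑ k, y k) - c) x = 1 := by
  set L : (Fin N → ℝ) →L[ℝ] ℝ := ∑ k : Fin N, ContinuousLinearMap.proj k with hL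
  have hLapp : ∀ y : Fin N → ℝ, L y = ∑ k, y k := by
    intro y
    simp [hL, ContinuousLinearMap.sum_apply]
  have hf : (fun y : Fin N → ℝ => (∑ k, y k) - c) = fun y => L y - c := by
    funext y; rw [hLapp]
  have hderiv : HasFDerivAt (fun y : Fin N → ℝ => (∑ k, y k) - c) L x := by
    rw [hf]; exact L.hasFDerivAt.sub_const c
  rw [pd, hderiv.fderiv, hLapp]
  simp [Pi.single_apply]

theorem Lop_eigen_sum (N : ℕ) (hN : 1 ≤ N) (α : Fin (N + 1) → ℝ) (hα : ∀ k, 0 < α k)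
    (x : Fin N → ℝ) (hx : x ∈ simplex N) :
    Lop N α (fun y => (∑ k, y k) - ((∑ k, α k) - α (Fin.last N)) / ∑ k, α k) x
      = -(∑ k, α k) * ((∑ k, x k) - ((∑ k, α k) - α (Fin.last N)) / ∑ k, α k) := by
  set c : ℝ := ((∑ k, α k) - α (Fin.last N)) / ∑ k, α k with hc
  have hA : (0:ℝ) < ∑ k, α k := Finset.sum_pos (fun k _ => hα k) Finset.univ_nonempty
  have h1 : ∀ n : Fin N, pd N n (fun y => (∑ k, y k) - c) x = 1 :=
    fun n => pd_sum_sub_const N c n x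
  have h2 : ∀ n : Fin N,
      pd N n (fun y => pd N n (fun y => (∑ k, y k) - c) y) x = 0 := by
    intro n
    have : (fun y : Fin N → ℝ => pd N n (fun y => (∑ k, y k) - c) y) = fun _ => (1:ℝ) := by
      funext y; exact pd_sum_sub_const N c n y
    rw [pd, this, fderiv_fun_const]
    simp
  rw [Lop]
  simp only [h1, h2]
  have hsplit : (∑ k, α k) = (∑ n : Fin N, α (Fin.castSucc n)) + α (Fin.last N) :=
    Fin.sum_univ_castSucc α
  have hexp : ∑ n : Fin N, (x n * (1 - ∑ i, x i) * 0
      + (α (Fin.castSucc n) * (1 - ∑ i, x i) - α (Fin.last N) * x n) * 1)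
      = (∑ n : Fin N, α (Fin.castSucc n)) * (1 - ∑ i, x i)
        - α (Fin.last N) * ∑ i, x i := by
    rw [Finset.sum_congr rfl (fun n _ => by ring :
      ∀ n ∈ Finset.univ, (x n * (1 - ∑ i, x i) * 0
        + (α (Fin.castSucc n) * (1 - ∑ i, x i) - α (Fin.last N) * x n) * 1)
        = α (Fin.castSucc n) * (1 - ∑ i, x i) - α (Fin.last N) * x n)]
    rw [Finset.sum_sub_distrib, ← Finset.sum_mul, ← Finset.mul_sum]
  rw [hexp, hc]
  have hB : (∑ n : Fin N, α (Fin.castSucc n)) = (∑ k, α k) - α (Fin.last N) := by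
    rw [hsplit]; ring
  rw [hB]
  field_simp
  ring

end
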